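/- For all integers r ≥ 1 and c ≥ 1 there exists an integer N₀ (depending only on r and c) such that the following holds for every integer N ≥ N₀. Let A and B be subsets of Fin (N^(2r)) with |A| = N^(2r−1) and |A ∩ B| ≤ 2·N^(2r−2). If S is drawn uniformly at random from all N-element subsets of A, then the probability that |S ∩ B| ≥ 2·c·r·log N is at most N^(−c·r), where log denotes the natural logarithm. -/

import Mathlib

open Finset
open scoped ENNReal NNReal
open Finset

/-- Fibers: subsets of `A` of size `N` containing a fixed `T ⊆ A`. -/
lemma fiber_card_le {α : Type*} [DecidableEq α] (A T : Finset α) (N : ℕ) (hTA : T ⊆ A) :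
    ((A.powersetCard N).filter (fun S => T ⊆ S)).card
      ≤ (A.card - T.card).choose (N - T.card) := by
  rw [← Finset.card_sdiff_of_subset hTA, ← Finset.card_powersetCard (N - T.card) (A \ T)]
  apply Finset.card_le_card_of_injOn (fun S => S \ T)
  · intro S hS
    simp only [Finset.mem_coe, Finset.mem_filter, Finset.mem_powersetCard] at hS ⊢
    obtain ⟨⟨hSA, hcard⟩, hTS⟩ := hS
    refine ⟨Finset.sdiff_subset_sdiff hSA le_rfl, ?_⟩
    rw [Finset.card_sdiff_of_subset hTS, hcard]
  · intro S₁ h₁ S₂ h₂ h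
    simp only [Finset.mem_coe, Finset.mem_filter, Finset.mem_powersetCard] at h₁ h₂
    have e₁ : S₁ = S₁ \ T ∪ T := (Finset.sdiff_union_of_subset h₁.2).symm
    have e₂ : S₂ = S₂ \ T ∪ T := (Finset.sdiff_union_of_subset h₂.2).symm
    rw [e₁, e₂, show S₁ \ T = S₂ \ T from h]

lemma count_le {α : Type*} [DecidableEq α] (A B : Finset α) (N k : ℕ) :
    ((A.powersetCard N).filter (fun S => k ≤ (S ∩ B).card)).card
      ≤ (A ∩ B).card.choose k * (A.card - k).choose (N - k) := by
  have hsub : (A.powersetCard N).filter (fun S => k ≤ (S ∩ B).card) ⊆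
      ((A ∩ B).powersetCard k).biUnion
        (fun T => (A.powersetCard N).filter (fun S => T ⊆ S)) := by
    intro S hS
    simp only [Finset.mem_filter, Finset.mem_powersetCard] at hS
    obtain ⟨⟨hSA, hN⟩, hk⟩ := hS
    obtain ⟨T, hT, hTk⟩ := Finset.exists_subset_card_eq hk
    refine Finset.mem_biUnion.2 ⟨T, ?_, ?_⟩
    · exact Finset.mem_powersetCard.2
        ⟨hT.trans (Finset.inter_subset_inter hSA le_rfl), hTk⟩
    · exact Finset.mem_filter.2 ⟨Finset.mem_powersetCard.2 ⟨hSA, hN⟩,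
        hT.trans Finset.inter_subset_left⟩
  calc ((A.powersetCard N).filter (fun S => k ≤ (S ∩ B).card)).card
      ≤ (((A ∩ B).powersetCard k).biUnion
          (fun T => (A.powersetCard N).filter (fun S => T ⊆ S))).card :=
        Finset.card_le_card hsub
    _ ≤ ∑ T ∈ (A ∩ B).powersetCard k,
          ((A.powersetCard N).filter (fun S => T ⊆ S)).card := Finset.card_biUnion_le
    _ ≤ ((A ∩ B).powersetCard k).card * (A.card - k).choose (N - k) := by
        rw [← smul_eq_mul]
        apply Finset.sum_le_card_nsmul
        intro T hT
        rw [Finset.mem_powersetCard] at hT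
        have := fiber_card_le A T N (hT.1.trans Finset.inter_subset_left)
        rwa [hT.2] at this
    _ = (A ∩ B).card.choose k * (A.card - k).choose (N - k) := by
        rw [Finset.card_powersetCard]

lemma core_ineq (N r c k m : ℕ) (hr : 1 ≤ r) (hN1 : 1 ≤ N)
    (hm : m ≤ 2 * N ^ (2 * r - 2)) (h2k : 2 * k ≤ N)
    (hfac : 4 ^ k * N ^ (c * r) ≤ Nat.factorial k) :
    m.choose k * N.choose k * N ^ (c * r) ≤ (N ^ (2 * r - 1)).choose k := by
  set a := N ^ (2 * r - 1) with ha
  have hNa : N ≤ a := by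
    calc N = N ^ 1 := (pow_one N).symm
    _ ≤ a := Nat.pow_le_pow_right hN1 (by omega)
  have hka : 2 * k ≤ a := le_trans h2k hNa
  have key : Nat.factorial k * Nat.factorial k * (m.choose k * N.choose k * N ^ (c * r))
      ≤ Nat.factorial k * Nat.factorial k * a.choose k := by
    have hsplit : a ^ k = N ^ ((2 * r - 2) * k) * N ^ k := by
      rw [ha, ← pow_mul, ← pow_add]
      congr 1
      have : 2 * r - 1 = (2 * r - 2) + 1 := by omega
      rw [this]; ring
    calc Nat.factorial k * Nat.factorial k * (m.choose k * N.choose k * N ^ (c * r))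
        = (Nat.factorial k * m.choose k) * (Nat.factorial k * N.choose k) * N ^ (c * r) := by
          ring
      _ = m.descFactorial k * N.descFactorial k * N ^ (c * r) := by
          rw [← Nat.descFactorial_eq_factorial_mul_choose,
            ← Nat.descFactorial_eq_factorial_mul_choose]
      _ ≤ m ^ k * N ^ k * N ^ (c * r) :=
          Nat.mul_le_mul_right _
            (Nat.mul_le_mul (Nat.descFactorial_le_pow m k) (Nat.descFactorial_le_pow N k))
      _ ≤ (2 * N ^ (2 * r - 2)) ^ k * N ^ k * N ^ (c * r) :=
          Nat.mul_le_mul_right _ (Nat.mul_le_mul_right _ (Nat.pow_le_pow_left hm k))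
      _ = 2 ^ k * a ^ k * N ^ (c * r) := by
          rw [mul_pow, hsplit, pow_mul]; ring
      _ ≤ 2 ^ k * (2 ^ k * (a + 1 - k) ^ k) * N ^ (c * r) := by
          apply Nat.mul_le_mul_right
          apply Nat.mul_le_mul_left
          calc a ^ k ≤ (2 * (a + 1 - k)) ^ k := Nat.pow_le_pow_left (by omega) k
            _ = 2 ^ k * (a + 1 - k) ^ k := mul_pow 2 _ k
      _ = (4 ^ k * N ^ (c * r)) * (a + 1 - k) ^ k := by
          have : (4 : ℕ) ^ k = 2 ^ k * 2 ^ k := by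
            rw [← mul_pow]; norm_num
          rw [this]; ring
      _ ≤ Nat.factorial k * (a + 1 - k) ^ k := Nat.mul_le_mul_right _ hfac
      _ ≤ Nat.factorial k * a.descFactorial k :=
          Nat.mul_le_mul_left _ (Nat.pow_sub_le_descFactorial a k)
      _ = Nat.factorial k * Nat.factorial k * a.choose k := by
          rw [Nat.descFactorial_eq_factorial_mul_choose, ← mul_assoc]
  exact Nat.le_of_mul_le_mul_left key (by positivity)

/-- Chernoff-type tail bound for sampling without replacement: for `N` large enough
(in terms of `r`, `c`), if `A`, `B ⊆ Fin (N^(2r))` with `|A| = N^(2r-1)` and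
`|A ∩ B| ≤ 2 N^(2r-2)`, and `S` is a uniformly random `N`-subset of `A`, then
`|S ∩ B| ≥ 2 c r log N` with probability at most `N^(-c r)`. -/
theorem sampling_tail_bound :
    ∀ r c : ℕ, 1 ≤ r → 1 ≤ c →
      ∃ N₀ : ℕ, ∀ N : ℕ, N₀ ≤ N →
        ∀ A B : Finset (Fin (N ^ (2 * r))),
          A.card = N ^ (2 * r - 1) →
          (A ∩ B).card ≤ 2 * N ^ (2 * r - 2) →
          ∀ hne : (Finset.powersetCard N A).Nonempty,
            (PMF.uniformOfFinset (Finset.powersetCard N A) hne).toOuterMeasure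
                {S | 2 * (c : ℝ) * (r : ℝ) * Real.log N ≤ ((S ∩ B).card : ℝ)}
              ≤ ENNReal.ofReal (((N : ℝ) ^ (c * r))⁻¹) := by
  classical
  intro r c hr hc
  obtain ⟨K, hK⟩ := Filter.eventually_atTop.mp (Nat.eventually_pow_lt_factorial_sub 8 0)
  refine ⟨100 * c ^ 2 * r ^ 2 + ⌈Real.exp K⌉₊ + 2, ?_⟩
  intro N hN A B hA hAB hne
  have hN2 : 2 ≤ N := by omega
  have hN1 : 1 ≤ N := by omega
  have hN0R : (0 : ℝ) < N := by exact_mod_cast Nat.pos_of_ne_zero (by omega)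
  have hN1R : (1 : ℝ) ≤ N := by exact_mod_cast hN1
  have hcR : (1 : ℝ) ≤ (c : ℝ) := by exact_mod_cast hc
  have hrR : (1 : ℝ) ≤ (r : ℝ) := by exact_mod_cast hr
  have hlogN0 : 0 ≤ Real.log N := Real.log_nonneg hN1R
  have hexpK : Real.exp K ≤ N := by
    have h1 : Real.exp K ≤ (⌈Real.exp K⌉₊ : ℝ) := Nat.le_ceil _
    have h2 : (⌈Real.exp K⌉₊ : ℝ) ≤ N := by
      have : ⌈Real.exp K⌉₊ ≤ N := by omega
      exact_mod_cast this
    linarith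
  have hNcr : ((100 * c ^ 2 * r ^ 2 : ℕ) : ℝ) ≤ N := by
    have : 100 * c ^ 2 * r ^ 2 ≤ N := by omega
    exact_mod_cast this
  set k := ⌈2 * (c : ℝ) * (r : ℝ) * Real.log N⌉₊ with hkdef
  have hkceil : 2 * (c : ℝ) * (r : ℝ) * Real.log N ≤ (k : ℝ) := Nat.le_ceil _
  have hkubR : (k : ℝ) < 2 * (c : ℝ) * (r : ℝ) * Real.log N + 1 :=
    Nat.ceil_lt_add_one (by positivity)
  clear_value k
  have hKlog : (K : ℝ) ≤ Real.log N := by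
    calc (K : ℝ) = Real.log (Real.exp K) := (Real.log_exp _).symm
      _ ≤ Real.log N := Real.log_le_log (Real.exp_pos _) hexpK
  have hKk : K ≤ k := by
    have h0 : (1 : ℝ) ≤ 2 * (c : ℝ) * r := by nlinarith
    have h1 : (1 : ℝ) * Real.log N ≤ 2 * (c : ℝ) * r * Real.log N :=
      mul_le_mul_of_nonneg_right h0 hlogN0
    have h : (K : ℝ) ≤ (k : ℝ) := by linarith
    exact_mod_cast h
  have hfact8 : 8 ^ k < Nat.factorial k := by simpa using hK k hKk
  -- 2 * k ≤ N
  have hsqrt : Real.sqrt N * Real.sqrt N = N := Real.mul_self_sqrt (le_of_lt hN0R)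
  have hsqN1 : 1 ≤ Real.sqrt N := by
    rw [show (1 : ℝ) = Real.sqrt 1 by simp]
    exact Real.sqrt_le_sqrt hN1R
  have hsq10 : 10 * (c : ℝ) * r ≤ Real.sqrt N := by
    have h1 : (10 * (c : ℝ) * r) ^ 2 = ((100 * c ^ 2 * r ^ 2 : ℕ) : ℝ) := by push_cast; ring
    have h2 : 0 ≤ 10 * (c : ℝ) * r := by positivity
    have h3 : Real.sqrt ((10 * (c : ℝ) * r) ^ 2) ≤ Real.sqrt N :=
      Real.sqrt_le_sqrt (by rw [h1]; exact hNcr)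
    rwa [Real.sqrt_sq h2] at h3
  have hlog2sqrt : Real.log N ≤ 2 * Real.sqrt N := by
    have h1 : Real.log (Real.sqrt N) ≤ Real.sqrt N - 1 :=
      Real.log_le_sub_one_of_pos (by positivity)
    have h2 : Real.log (Real.sqrt N) = Real.log N / 2 := Real.log_sqrt (le_of_lt hN0R)
    linarith
  have h2k : 2 * k ≤ N := by
    have hcr1 : (1 : ℝ) * 1 ≤ (c : ℝ) * r :=
      mul_le_mul hcR hrR zero_le_one (le_trans zero_le_one hcR)
    have hcrs : (1 : ℝ) * 1 ≤ ((c : ℝ) * r) * Real.sqrt N :=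
      mul_le_mul (by linarith) hsqN1 zero_le_one (by linarith)
    have t1 : 2 * (c : ℝ) * r * Real.log N ≤ 2 * (c : ℝ) * r * (2 * Real.sqrt N) := by
      have := mul_le_mul_of_nonneg_left hlog2sqrt
        (show (0:ℝ) ≤ 2 * (c : ℝ) * r by positivity)
      linarith
    have t2 : (10 * (c : ℝ) * r) * Real.sqrt N ≤ Real.sqrt N * Real.sqrt N :=
      mul_le_mul_of_nonneg_right hsq10 (Real.sqrt_nonneg _)
    have h : 2 * (k : ℝ) < (N : ℝ) := by nlinarith
    have h' : 2 * k < N := by exact_mod_cast h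
    omega
  have hkN : k ≤ N := by omega
  -- N ^ (c * r) ≤ 2 ^ k
  have hpow2 : N ^ (c * r) ≤ 2 ^ k := by
    have hR : ((N : ℝ)) ^ (c * r) ≤ (2 : ℝ) ^ k := by
      have e1 : ((N : ℝ)) ^ (c * r) = Real.exp (((c * r : ℕ) : ℝ) * Real.log N) := by
        rw [← Real.log_pow, Real.exp_log (by positivity)]
      have e2 : (2 : ℝ) ^ k = Real.exp ((k : ℝ) * Real.log 2) := by
        rw [← Real.log_pow, Real.exp_log (by positivity)]
      rw [e1, e2]
      apply Real.exp_le_exp.mpr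
      have hlog2 : (0.5 : ℝ) ≤ Real.log 2 := by
        have := Real.log_two_gt_d9; linarith
      have hcrk : ((c * r : ℕ) : ℝ) * Real.log N ≤ (k : ℝ) / 2 := by
        push_cast; linarith [hkceil]
      have hk0 : (0 : ℝ) ≤ (k : ℝ) := by positivity
      have hhalf : (k : ℝ) * 0.5 ≤ (k : ℝ) * Real.log 2 :=
        mul_le_mul_of_nonneg_left hlog2 hk0
      linarith
    exact_mod_cast hR
  have hfac : 4 ^ k * N ^ (c * r) ≤ Nat.factorial k := by
    calc 4 ^ k * N ^ (c * r) ≤ 4 ^ k * 2 ^ k := Nat.mul_le_mul_left _ hpow2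
      _ = 8 ^ k := by rw [← mul_pow]; norm_num
      _ ≤ Nat.factorial k := le_of_lt hfact8
  have hcore := core_ineq N r c k (A ∩ B).card hr hN1 hAB h2k hfac
  have hcount := count_le A B N k
  set D := (A.powersetCard N).card with hD
  have hDa : D = (N ^ (2 * r - 1)).choose N := by
    rw [hD, Finset.card_powersetCard, hA]
  have hNa : N ≤ N ^ (2 * r - 1) := by
    calc N = N ^ 1 := (pow_one N).symm
      _ ≤ N ^ (2 * r - 1) := Nat.pow_le_pow_right hN1 (by omega)
  have hid : (N ^ (2 * r - 1)).choose N * N.choose k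
      = (N ^ (2 * r - 1)).choose k * ((N ^ (2 * r - 1)) - k).choose (N - k) :=
    Nat.choose_mul hkN
  rw [PMF.toOuterMeasure_uniformOfFinset_apply]
  set E := {S : Finset (Fin (N ^ (2 * r))) |
    2 * (c : ℝ) * (r : ℝ) * Real.log N ≤ ((S ∩ B).card : ℝ)} with hE
  have hfsub : (A.powersetCard N).filter (· ∈ E)
      ⊆ (A.powersetCard N).filter (fun S => k ≤ (S ∩ B).card) := by
    intro S hS
    rw [Finset.mem_filter] at hS ⊢
    refine ⟨hS.1, ?_⟩
    rw [hkdef]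
    exact Nat.ceil_le.mpr hS.2
  have hmain : ((A.powersetCard N).filter (· ∈ E)).card * N ^ (c * r) ≤ D := by
    have h1 : ((A.powersetCard N).filter (· ∈ E)).card * N ^ (c * r) * N.choose k
        ≤ D * N.choose k := by
      calc ((A.powersetCard N).filter (· ∈ E)).card * N ^ (c * r) * N.choose k
          ≤ ((A ∩ B).card.choose k * (A.card - k).choose (N - k)) * N ^ (c * r)
              * N.choose k := by
            apply Nat.mul_le_mul_right
            apply Nat.mul_le_mul_right
            exact le_trans (Finset.card_le_card hfsub) hcount
        _ = ((A ∩ B).card.choose k * N.choose k * N ^ (c * r))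
              * ((A.card - k).choose (N - k)) := by ring
        _ ≤ (N ^ (2 * r - 1)).choose k * ((N ^ (2 * r - 1) - k).choose (N - k)) := by
            rw [hA]; exact Nat.mul_le_mul_right _ hcore
        _ = D * N.choose k := by rw [hDa, hid]
    exact Nat.le_of_mul_le_mul_right h1 (Nat.choose_pos hkN)
  have hD0 : (D : ℝ≥0∞) ≠ 0 := by
    simp only [ne_eq, Nat.cast_eq_zero]
    exact Finset.card_ne_zero.mpr hne
  have hRHS : ENNReal.ofReal (((N : ℝ) ^ (c * r))⁻¹) = ((N ^ (c * r) : ℕ) : ℝ≥0∞)⁻¹ := by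
    rw [ENNReal.ofReal_inv_of_pos (by positivity), ← Nat.cast_pow, ENNReal.ofReal_natCast]
  rw [hRHS, ENNReal.div_le_iff hD0 (ENNReal.natCast_ne_top D), ← ENNReal.div_eq_inv_mul,
    ENNReal.le_div_iff_mul_le
      (Or.inl (by simp only [ne_eq, Nat.cast_eq_zero]; positivity))
      (Or.inl (ENNReal.natCast_ne_top _))]
  exact_mod_cast hmain
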